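/- Let S be a semitransitive subsemigroup of the symmetric inverse semigroup I_n (n ≥ 1). Then for every x in the underlying set X there exists an idempotent e ∈ S with x in the domain of e (equivalently, e(x) = x). -/
import Mathlib

/-- `ISemi n` is the symmetric inverse semigroup `I_n`, realized as the set of all
partial injective maps (partial permutations) of the `n`-element set `Fin n`,
with composition given by `PEquiv.trans` (apply the left factor first, matching
the right-action convention `x φ`). -/
abbrev ISemi (n : ℕ) := PEquiv (Fin n) (Fin n)

/-- `S` is a subsemigroup of `I_n`: a subset closed under composition. -/
def IsSubsemigroup {n : ℕ} (S : Set (ISemi n)) : Prop :=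
  ∀ a ∈ S, ∀ b ∈ S, a.trans b ∈ S

/-- `φ` belongs to the singular part `I_n \ S_n`: its domain is a proper subset
of the underlying set, i.e. it is undefined somewhere. -/
def IsSingular {n : ℕ} (φ : ISemi n) : Prop :=
  ∃ x : Fin n, φ x = none

/-- `S` is semitransitive: for all `x, y` there is `φ ∈ S` with `φ x = y` or `φ y = x`. -/
def Semitransitive {n : ℕ} (S : Set (ISemi n)) : Prop :=
  ∀ x y : Fin n, ∃ φ ∈ S, φ x = some y ∨ φ y = some x

/-- The semitransitivity preorder induced by `S`: `x ≥ y` iff some `φ ∈ S` maps `x` to `y`. -/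
def STGe {n : ℕ} (S : Set (ISemi n)) (x y : Fin n) : Prop :=
  ∃ φ ∈ S, φ x = some y

/-- The transitivity block of `x`: the equivalence class of `x` under `x ≥ y ∧ y ≥ x`. -/
def STBlock {n : ℕ} (S : Set (ISemi n)) (x : Fin n) : Set (Fin n) :=
  {y | STGe S x y ∧ STGe S y x}

/-- `k`-th power of `φ` under composition (`pePow φ 0` is the identity). -/
def pePow {n : ℕ} (φ : ISemi n) : ℕ → ISemi n
  | 0 => PEquiv.refl (Fin n)
  | k + 1 => (pePow φ k).trans φ

lemma pePow_add {n : ℕ} (φ : ISemi n) (a b : ℕ) :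
    pePow φ (a + b) = (pePow φ a).trans (pePow φ b) := by
  induction b with
  | zero => simp [pePow, PEquiv.trans_refl]
  | succ b ih => rw [← Nat.add_assoc]; simp [pePow, ih, PEquiv.trans_assoc]

lemma pePow_mem {n : ℕ} {S : Set (ISemi n)} (hsub : IsSubsemigroup S)
    {φ : ISemi n} (hφ : φ ∈ S) : ∀ k, pePow φ (k + 1) ∈ S := by
  intro k
  induction k with
  | zero => simpa [pePow, PEquiv.refl_trans] using hφ
  | succ k ih => exact hsub _ ih _ hφ

lemma pePow_fix {n : ℕ} {φ : ISemi n} {x : Fin n} (hx : φ x = some x) :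
    ∀ k, pePow φ k x = some x := by
  intro k
  induction k with
  | zero => simp [pePow]
  | succ k ih =>
      show (pePow φ k).trans φ x = some x
      rw [PEquiv.trans_eq_some]
      exact ⟨x, ih, hx⟩

lemma pePow_stable {n : ℕ} {φ : ISemi n} {m d : ℕ}
    (h : pePow φ m = pePow φ (m + d)) :
    ∀ N, m ≤ N → ∀ k, pePow φ (N + k * d) = pePow φ N := by
  intro N hN k
  induction k with
  | zero => simp
  | succ k ih =>
      rw [Nat.succ_mul]
      have : N + (k * d + d) = (N - m + k * d) + (m + d) := by omega
      rw [this, pePow_add, ← h, ← pePow_add]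
      have : N - m + k * d + m = N + k * d := by omega
      rw [this, ih]

/-- in a semitransitive subsemigroup of `I_n`, every point of the
underlying set lies in the domain of some idempotent of `S`. -/
theorem stmt11 (n : ℕ) (hn : 1 ≤ n) (S : Set (ISemi n))
    (hsub : IsSubsemigroup S)
    (hst : Semitransitive S) :
    ∀ x : Fin n, ∃ e ∈ S, e.trans e = e ∧ e x = some x := by
  intro x
  obtain ⟨φ, hφS, hfix⟩ := hst x x
  have hfix : φ x = some x := by rcases hfix with h | h <;> exact h
  -- find repetition among powers
  haveI : Finite (ISemi n) :=
    Finite.of_injective (fun e => (e : Fin n → Option (Fin n))) DFunLike.coe_injective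
  obtain ⟨a, b, hab, heq⟩ :=
    Finite.exists_ne_map_eq_of_infinite (fun k : ℕ => pePow φ (k + 1))
  wlog hlt : a < b generalizing a b
  · exact this b a hab.symm heq.symm (by omega)
  set m := a + 1 with hm
  set d := b - a with hd
  have hmd : pePow φ m = pePow φ (m + d) := by
    have : m + d = b + 1 := by omega
    rw [this]; exact heq
  have hstab := pePow_stable hmd
  refine ⟨pePow φ (m * d), ?_, ?_, pePow_fix hfix _⟩
  · have : m * d = (m * d - 1) + 1 := by
      have : 1 ≤ m * d := Nat.one_le_iff_ne_zero.mpr (Nat.mul_ne_zero (by omega) (by omega))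
      omega
    rw [this]; exact pePow_mem hsub hφS _
  · rw [← pePow_add]
    have h1 : m * d + m * d = m * d + m * d := rfl
    have := hstab (m * d) (Nat.le_mul_of_pos_right m (by omega)) m
    simpa [Nat.add_comm] using this
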